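/- Let d ≥ 2 be even, let G be a finite group, and let (ρ_t)_{t∈T} be a complete family of irreducible unitary matrix representations of G with dimensions n_t. Let U be the matrix with rows indexed by triples (t,i,j) (t ∈ T, i,j ∈ Fin n_t) and columns indexed by G, with entries U_{(t,i,j),g} = (n_t/|G|)^{1/2} · ρ_t(g)_{ij}. Then: (1) U is unitary, i.e. U·U* = I; and (2) applying U to every mode of the group hypermatrix C^G(x) yields the block-diagonal hypermatrix B given by B_{(t₁,i₁,j₁),…,(t_d,i_d,j_d)} = (|G|/n_t)^{d/2−1} · (Σ_{g∈G} x_g ρ_t(g))_{i₁ j_d} if t₁ = ⋯ = t_d = t and j₁=i₂, j₂=i₃, …, j_{d−1}=i_d, and B = 0 at all other index tuples. That is, C^G(x) is unitarily equivalent to the direct sum ⊕_{t∈T} (|G|/n_t)^{d/2−1} · M^{(d)}_{ρ_t(x)} with ρ_t(x) = Σ_g x_g ρ_t(g). -/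

import Mathlib

/-- The group hypermatrix: entry at `(g₁, …, g_d)` is the variable `x_{g₁⋯g_d}`. -/
noncomputable def groupHyper (d : ℕ) (G : Type*) [Group G] :
    (Fin d → G) → MvPolynomial G ℂ :=
  fun g => MvPolynomial.X (List.ofFn g).prod
/-- The representation on `Fin m → ℂ` associated to a matrix representation. -/
noncomputable def matRep {G : Type*} [Monoid G] {m : ℕ}
    (ρ : G →* Matrix (Fin m) (Fin m) ℂ) : Representation ℂ G (Fin m → ℂ) :=
  (Matrix.toLinAlgEquiv'.toAlgHom.toRingHom.toMonoidHom).comp ρ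
/-- The matrix `Σ_g x_g ρ(g)` with entries in `MvPolynomial G ℂ`. -/
noncomputable def repMatrix {G : Type*} [Group G] [Fintype G] {m : ℕ}
    (ρ : G →* Matrix (Fin m) (Fin m) ℂ) :
    Matrix (Fin m) (Fin m) (MvPolynomial G ℂ) :=
  ∑ g : G, (MvPolynomial.X g : MvPolynomial G ℂ) • (ρ g).map (MvPolynomial.C : ℂ → MvPolynomial G ℂ)
/-- A complete family of irreducible unitary matrix representations of a finite group `G`:
each `ρ t g` is unitary, each `ρ t` is irreducible (the associated module over
`MonoidAlgebra ℂ G` is simple), the representations are pairwise non-isomorphic, and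
`Σ_t n_t² = |G|`. -/
structure IsCompleteIrrFamily (G : Type*) [Group G] [Fintype G]
    {T : Type*} [Fintype T] (n : T → ℕ)
    (ρ : ∀ t, G →* Matrix (Fin (n t)) (Fin (n t)) ℂ) : Prop where
  unitary : ∀ t g, ρ t g ∈ Matrix.unitaryGroup (Fin (n t)) ℂ
  irred : ∀ t, IsSimpleModule (MonoidAlgebra ℂ G) (matRep (ρ t)).asModule
  noniso : ∀ t t', t ≠ t' →
    IsEmpty ((matRep (ρ t)).asModule ≃ₗ[MonoidAlgebra ℂ G] (matRep (ρ t')).asModule)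
  sum_sq : ∑ t, (n t) ^ 2 = Fintype.card G


namespace GHAux
open Matrix Classical
set_option linter.unusedSectionVars false

variable {G : Type*} [Group G] [Fintype G] [DecidableEq G]

lemma matRep_apply {m : ℕ} (ρ : G →* Matrix (Fin m) (Fin m) ℂ) (g : G) (v : Fin m → ℂ) :
    matRep ρ g v = (ρ g).mulVec v := rfl

/-- An intertwining matrix gives a `MonoidAlgebra`-linear map between the modules. -/
noncomputable def equivHom {m p : ℕ} (ρ : G →* Matrix (Fin m) (Fin m) ℂ)
    (ψ : G →* Matrix (Fin p) (Fin p) ℂ) (M : Matrix (Fin m) (Fin p) ℂ)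
    (hM : ∀ g, ρ g * M = M * ψ g) :
    (matRep ψ).asModule →ₗ[MonoidAlgebra ℂ G] (matRep ρ).asModule where
  toFun v := (matRep ρ).asModuleEquiv.symm (M.mulVec ((matRep ψ).asModuleEquiv v))
  map_add' v w := by simp [Matrix.mulVec_add]
  map_smul' r v := by
    apply (matRep ρ).asModuleEquiv.injective
    simp only [RingHom.id_apply, AddEquiv.apply_symm_apply, Representation.asModuleEquiv_map_smul]
    generalize (matRep ψ).asModuleEquiv v = w
    induction r using MonoidAlgebra.induction_on with
    | of g =>
        simp only [Representation.asAlgebraHom_of, matRep_apply, Matrix.mulVec_mulVec]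
        rw [(matRep ρ).asModuleEquiv.apply_symm_apply, (matRep ρ).asModuleEquiv.apply_symm_apply,
          Matrix.mulVec_mulVec]
        rw [hM]
    | add f₁ f₂ h₁ h₂ =>
        simp only [map_add, LinearMap.add_apply, Matrix.mulVec_add, h₁, h₂]
    | smul c f h =>
        simp only [_root_.map_smul, LinearMap.smul_apply, Matrix.mulVec_smul, h]

lemma mulVec_eq_zero_iff {m p : ℕ} (M : Matrix (Fin m) (Fin p) ℂ)
    (h : ∀ v, M.mulVec v = 0) : M = 0 := by
  ext i j
  have := congrFun (h (Pi.single j 1)) i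
  simpa [Matrix.mulVec_single] using this

/-- Schur: an intertwiner between non-isomorphic irreducibles is zero. -/
lemma intertwiner_eq_zero {m p : ℕ} (ρ : G →* Matrix (Fin m) (Fin m) ℂ)
    (ψ : G →* Matrix (Fin p) (Fin p) ℂ)
    [IsSimpleModule (MonoidAlgebra ℂ G) (matRep ρ).asModule]
    [IsSimpleModule (MonoidAlgebra ℂ G) (matRep ψ).asModule]
    (hno : IsEmpty ((matRep ψ).asModule ≃ₗ[MonoidAlgebra ℂ G] (matRep ρ).asModule))
    (M : Matrix (Fin m) (Fin p) ℂ) (hM : ∀ g, ρ g * M = M * ψ g) : M = 0 := by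
  rcases (equivHom ρ ψ M hM).bijective_or_eq_zero with hb | h0
  · exact (hno.false (LinearEquiv.ofBijective _ hb)).elim
  · apply mulVec_eq_zero_iff
    intro v
    have := congrArg (matRep ρ).asModuleEquiv
      (LinearMap.congr_fun h0 ((matRep ψ).asModuleEquiv.symm v))
    simpa [equivHom] using this

/-- Schur: a self-intertwiner of an irreducible is scalar. -/
lemma intertwiner_eq_smul {m : ℕ} (ρ : G →* Matrix (Fin m) (Fin m) ℂ)
    [IsSimpleModule (MonoidAlgebra ℂ G) (matRep ρ).asModule]
    (M : Matrix (Fin m) (Fin m) ℂ) (hM : ∀ g, ρ g * M = M * ρ g) :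
    ∃ c : ℂ, M = c • (1 : Matrix (Fin m) (Fin m) ℂ) := by
  have hnt : Nontrivial ((matRep ρ).asModule) := IsSimpleModule.nontrivial (MonoidAlgebra ℂ G) ((matRep ρ).asModule)
  have hnt' : Nontrivial (Fin m → ℂ) := (matRep ρ).asModuleEquiv.toEquiv.symm.nontrivial
  obtain ⟨μ, hμ⟩ := Module.End.exists_eigenvalue (Matrix.mulVecLin M)
  obtain ⟨v, hv⟩ := hμ.exists_hasEigenvector
  refine ⟨μ, ?_⟩
  have hN : ∀ g, ρ g * (M - μ • 1) = (M - μ • 1) * ρ g := by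
    intro g; rw [mul_sub, sub_mul, hM]; congr 1
    simp [Matrix.mul_smul, Matrix.smul_mul]
  have hzero : M - μ • 1 = 0 := by
    rcases (equivHom ρ ρ (M - μ • 1) hN).injective_or_eq_zero with hi | h0
    · exfalso
      have hfv : (equivHom ρ ρ (M - μ • 1) hN) ((matRep ρ).asModuleEquiv.symm v) = 0 := by
        apply (matRep ρ).asModuleEquiv.injective
        have hMv : M.mulVec v = μ • v := hv.apply_eq_smul
        simp [equivHom, Matrix.sub_mulVec, hMv, Matrix.smul_mulVec]
      have := hi (by rw [hfv, map_zero] : (equivHom ρ ρ (M - μ • 1) hN) _ = (equivHom ρ ρ (M - μ • 1) hN) 0)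
      exact hv.2 (by simpa using congrArg (matRep ρ).asModuleEquiv this)
    · apply mulVec_eq_zero_iff
      intro w
      have := congrArg (matRep ρ).asModuleEquiv
        (LinearMap.congr_fun h0 ((matRep ρ).asModuleEquiv.symm w))
      simpa [equivHom] using this
  exact sub_eq_zero.mp hzero

set_option linter.unusedSectionVars false

lemma rep_inv_eq_conjTranspose {p : ℕ} (ψ : G →* Matrix (Fin p) (Fin p) ℂ)
    (hu : ∀ g, ψ g ∈ Matrix.unitaryGroup (Fin p) ℂ) (g : G) : ψ g⁻¹ = (ψ g)ᴴ := by
  have h1 : ψ g * (ψ g)ᴴ = 1 := Matrix.mem_unitaryGroup_iff.mp (hu g)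
  have h2 : ψ g⁻¹ * ψ g = 1 := by rw [← _root_.map_mul, inv_mul_cancel, _root_.map_one]
  calc ψ g⁻¹ = ψ g⁻¹ * (ψ g * (ψ g)ᴴ) := by rw [h1, mul_one]
    _ = (ψ g⁻¹ * ψ g) * (ψ g)ᴴ := by rw [mul_assoc]
    _ = (ψ g)ᴴ := by rw [h2, one_mul]

lemma avg_intertwines {m p : ℕ} (ρ : G →* Matrix (Fin m) (Fin m) ℂ)
    (ψ : G →* Matrix (Fin p) (Fin p) ℂ) (M₀ : Matrix (Fin m) (Fin p) ℂ) (a : G) :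
    ρ a * (∑ g : G, ρ g * M₀ * ψ g⁻¹) = (∑ g : G, ρ g * M₀ * ψ g⁻¹) * ψ a := by
  rw [Matrix.mul_sum, Matrix.sum_mul]
  refine Fintype.sum_equiv (Equiv.mulLeft a) _ _ fun g => ?_
  simp only [Equiv.coe_mulLeft]
  have h3 : ψ (a*g)⁻¹ * ψ a = ψ g⁻¹ := by rw [← _root_.map_mul]; congr 1; group
  simp only [Matrix.mul_assoc]
  rw [h3, _root_.map_mul, Matrix.mul_assoc]

lemma triple_entry {m p : ℕ} (A : Matrix (Fin m) (Fin m) ℂ) (B : Matrix (Fin p) (Fin p) ℂ)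
    (i j : Fin m) (k l : Fin p) :
    (A * Matrix.single j l (1:ℂ) * B) i k = A i j * B l k := by
  rw [Matrix.mul_apply]
  have hE : ∀ b, (A * Matrix.single j l (1:ℂ)) i b = if l = b then A i j else 0 := by
    intro b
    rw [Matrix.mul_apply]
    simp [Matrix.single, ite_and, mul_ite, Finset.sum_ite_eq]
  simp only [hE, ite_mul, zero_mul]
  simp [Finset.sum_ite_eq]

/-- Schur orthogonality, distinct irreducibles. -/
lemma orth_ne {m p : ℕ} (ρ : G →* Matrix (Fin m) (Fin m) ℂ)
    (ψ : G →* Matrix (Fin p) (Fin p) ℂ)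
    (hu : ∀ g, ψ g ∈ Matrix.unitaryGroup (Fin p) ℂ)
    [IsSimpleModule (MonoidAlgebra ℂ G) (matRep ρ).asModule]
    [IsSimpleModule (MonoidAlgebra ℂ G) (matRep ψ).asModule]
    (hno : IsEmpty ((matRep ψ).asModule ≃ₗ[MonoidAlgebra ℂ G] (matRep ρ).asModule))
    (i : Fin m) (j : Fin m) (k : Fin p) (l : Fin p) :
    ∑ g : G, ρ g i j * (starRingEnd ℂ) (ψ g k l) = 0 := by
  have hS : (∑ g : G, ρ g * Matrix.single j l (1:ℂ) * ψ g⁻¹) = 0 :=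
    intertwiner_eq_zero ρ ψ hno _ (avg_intertwines ρ ψ _)
  have := congrFun (congrFun hS i) k
  rw [Matrix.sum_apply] at this
  simp only [Matrix.zero_apply] at this
  rw [← this]
  refine Finset.sum_congr rfl fun g _ => ?_
  rw [rep_inv_eq_conjTranspose ψ hu, triple_entry, Matrix.conjTranspose_apply]
  rfl

/-- Schur orthogonality, same irreducible. -/
lemma orth_eq {m : ℕ} (ρ : G →* Matrix (Fin m) (Fin m) ℂ)
    (hu : ∀ g, ρ g ∈ Matrix.unitaryGroup (Fin m) ℂ)
    [IsSimpleModule (MonoidAlgebra ℂ G) (matRep ρ).asModule]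
    (i j k l : Fin m) :
    ∑ g : G, ρ g i j * (starRingEnd ℂ) (ρ g k l) =
      ((Fintype.card G : ℂ) / (m : ℂ)) * (if i = k then 1 else 0) * (if j = l then 1 else 0) := by
  have hm : m ≠ 0 := by
    have hnt : Nontrivial ((matRep ρ).asModule) :=
      IsSimpleModule.nontrivial (MonoidAlgebra ℂ G) ((matRep ρ).asModule)
    have hnt' : Nontrivial (Fin m → ℂ) := (matRep ρ).asModuleEquiv.toEquiv.symm.nontrivial
    rintro rfl
    obtain ⟨x, y, hxy⟩ := hnt'
    exact hxy (funext fun i => absurd i.2 (by omega))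
  obtain ⟨c, hc⟩ := intertwiner_eq_smul ρ
    (∑ g : G, ρ g * Matrix.single j l (1:ℂ) * ρ g⁻¹) (avg_intertwines ρ ρ _)
  -- compute trace
  have htr : Matrix.trace (∑ g : G, ρ g * Matrix.single j l (1:ℂ) * ρ g⁻¹)
      = (Fintype.card G : ℂ) * (if j = l then 1 else 0) := by
    rw [Matrix.trace_sum]
    have : ∀ g : G, Matrix.trace (ρ g * Matrix.single j l (1:ℂ) * ρ g⁻¹)
        = (if j = l then 1 else 0) := by
      intro g
      rw [Matrix.trace_mul_cycle, ← _root_.map_mul, inv_mul_cancel, _root_.map_one, one_mul]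
      by_cases hjl : j = l
      · subst hjl
        simp [Matrix.trace, Matrix.diag, Matrix.single, Finset.sum_ite_eq]
      · rw [if_neg hjl]
        simp only [Matrix.trace, Matrix.diag]
        refine Finset.sum_eq_zero fun x _ => ?_
        apply Matrix.single_apply_of_ne
        rintro ⟨rfl, rfl⟩
        exact hjl rfl
    simp [this, Finset.sum_const, Finset.card_univ]
  have h1 : (m:ℂ) ≠ 0 := Nat.cast_ne_zero.mpr hm
  have h2 : c * (m:ℂ) = (Fintype.card G : ℂ) * (if j = l then 1 else 0) := by
    have := htr
    rw [hc, Matrix.trace_smul, Matrix.trace_one] at this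
    simpa [smul_eq_mul, Fintype.card_fin] using this
  have hcval : c = ((Fintype.card G : ℂ) / (m : ℂ)) * (if j = l then 1 else 0) := by
    rw [div_mul_eq_mul_div, eq_div_iff h1]
    exact h2
  have := congrFun (congrFun hc i) k
  rw [Matrix.sum_apply] at this
  have hlhs : ∑ g : G, (ρ g * Matrix.single j l (1:ℂ) * ρ g⁻¹) i k
      = ∑ g : G, ρ g i j * (starRingEnd ℂ) (ρ g k l) := by
    refine Finset.sum_congr rfl fun g _ => ?_
    rw [rep_inv_eq_conjTranspose ρ hu, triple_entry, Matrix.conjTranspose_apply]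
    rfl
  rw [hlhs] at this
  rw [this, hcval]
  by_cases hik : i = k
  · subst hik; simp [Matrix.one_apply]
  · simp [Matrix.one_apply, hik]
noncomputable def Fsum (m : ℕ) (f : Fin m → G → ℂ) (h : G) : ℂ :=
  ∑ g : Fin m → G, if (List.ofFn g).prod = h then ∏ ℓ, f ℓ (g ℓ) else 0

lemma Fsum_zero (f : Fin 0 → G → ℂ) (h : G) : Fsum 0 f h = if (1:G) = h then 1 else 0 := by
  simp [Fsum]

lemma Fsum_succ (m : ℕ) (f : Fin (m+1) → G → ℂ) (h : G) :
    Fsum (m+1) f h = ∑ a : G, f 0 a * Fsum m (fun ℓ => f ℓ.succ) (a⁻¹ * h) := by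
  rw [Fsum]
  rw [← (Fin.consEquiv (fun _ : Fin (m+1) => G)).sum_comp
    (fun g => if (List.ofFn g).prod = h then ∏ ℓ, f ℓ (g ℓ) else 0)]
  rw [Fintype.sum_prod_type]
  refine Finset.sum_congr rfl fun a _ => ?_
  rw [Fsum, Finset.mul_sum]
  refine Finset.sum_congr rfl fun g _ => ?_
  have hcond : (a * (List.ofFn g).prod = h) ↔ ((List.ofFn g).prod = a⁻¹ * h) := by
    constructor
    · intro hh; rw [← hh]; group
    · intro hh; rw [hh]; group
  simp only [Fin.consEquiv_apply, List.ofFn_succ, Fin.cons_zero, Fin.cons_succ, List.prod_cons,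
    Fin.prod_univ_succ]
  rw [if_congr hcond rfl rfl, mul_ite, mul_zero]



lemma conv_phi {T : Type*} [Fintype T] {n : T → ℕ}
    {ρ : ∀ t, G →* Matrix (Fin (n t)) (Fin (n t)) ℂ}
    (hρ : IsCompleteIrrFamily G n ρ)
    (s s' : Σ t : T, Fin (n t) × Fin (n t)) (h : G) :
    ∑ u : G, ρ s.1 u s.2.1 s.2.2 * ρ s'.1 (u⁻¹ * h) s'.2.1 s'.2.2 =
      if hc : s.1 = s'.1 ∧ (s.2.2 : ℕ) = (s'.2.1 : ℕ) then
        ((Fintype.card G : ℂ) / (n s.1 : ℂ)) *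
          ρ s.1 h s.2.1 (Fin.cast (congrArg n hc.1.symm) s'.2.2)
      else 0 := by
  obtain ⟨t, i, j⟩ := s
  obtain ⟨t', k, l⟩ := s'
  haveI := hρ.irred t
  haveI := hρ.irred t'
  have hstep : ∀ u : G, ρ t' (u⁻¹ * h) k l
      = ∑ a, (starRingEnd ℂ) (ρ t' u a k) * ρ t' h a l := by
    intro u
    rw [_root_.map_mul, Matrix.mul_apply]
    refine Finset.sum_congr rfl fun a _ => ?_
    rw [rep_inv_eq_conjTranspose (ρ t') (hρ.unitary t'), Matrix.conjTranspose_apply]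
    rfl
  have hcalc : ∑ u : G, ρ t u i j * ρ t' (u⁻¹ * h) k l
      = ∑ a, (∑ u : G, ρ t u i j * (starRingEnd ℂ) (ρ t' u a k)) * ρ t' h a l := by
    simp only [hstep, Finset.mul_sum]
    rw [Finset.sum_comm]
    refine Finset.sum_congr rfl fun a _ => ?_
    rw [Finset.sum_mul]
    refine Finset.sum_congr rfl fun u _ => ?_
    ring
  dsimp only
  rw [hcalc]
  by_cases ht : t = t'
  · subst ht
    have horth : ∀ a, (∑ u : G, ρ t u i j * (starRingEnd ℂ) (ρ t u a k)) =
        ((Fintype.card G : ℂ)/(n t : ℂ)) * (if i = a then 1 else 0) * (if j = k then 1 else 0) :=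
      fun a => orth_eq (ρ t) (hρ.unitary t) i j a k
    simp only [horth]
    by_cases hjk : j = k
    · subst hjk
      rw [dif_pos (by simp)]
      simp only [Fin.cast_eq_self, if_pos rfl, mul_one, ite_mul, mul_ite, mul_zero, zero_mul,
        Finset.sum_ite_eq, Finset.mem_univ, if_true]
    · rw [dif_neg (by simp [hjk, Fin.val_eq_val])]
      simp [hjk]
  · rw [dif_neg (by rintro ⟨h1, -⟩; exact ht h1)]
    haveI : IsEmpty ((matRep (ρ t')).asModule ≃ₗ[MonoidAlgebra ℂ G] (matRep (ρ t)).asModule) :=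
      hρ.noniso t' t (Ne.symm ht)
    have horth : ∀ a, (∑ u : G, ρ t u i j * (starRingEnd ℂ) (ρ t' u a k)) = 0 :=
      fun a => orth_ne (ρ t) (ρ t') (hρ.unitary t') this i j a k
    simp [horth]

lemma sum_pull {G : Type*} [Group G] [Fintype G] (F X : G → ℂ) (c : ℂ) :
    ∑ a : G, F a * (c * X a) = c * ∑ a : G, F a * X a := by
  rw [Finset.mul_sum]
  exact Finset.sum_congr rfl fun a _ => by ring

lemma Fsum_phi {T : Type*} [Fintype T] {n : T → ℕ}
    {ρ : ∀ t, G →* Matrix (Fin (n t)) (Fin (n t)) ℂ}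
    (hρ : IsCompleteIrrFamily G n ρ) :
    ∀ (m : ℕ) (s : Fin (m+1) → Σ t : T, Fin (n t) × Fin (n t)) (h : G),
    Fsum (m+1) (fun ℓ g => ρ (s ℓ).1 g (s ℓ).2.1 (s ℓ).2.2) h =
      if hc : (∀ ℓ, (s ℓ).1 = (s 0).1) ∧
          (∀ (ℓ : ℕ) (hℓ : ℓ + 1 < m + 1),
            (((s ⟨ℓ, by omega⟩).2.2 : ℕ) = ((s ⟨ℓ + 1, hℓ⟩).2.1 : ℕ)))
      then ((Fintype.card G : ℂ) / (n (s 0).1 : ℂ)) ^ m *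
        ρ (s 0).1 h (s 0).2.1
          (Fin.cast (congrArg n (hc.1 (Fin.last m))) (s (Fin.last m)).2.2)
      else 0 := by
  intro m
  induction m with
  | zero =>
    intro s h
    rw [Fsum_succ, dif_pos (⟨fun ℓ => by rw [show ℓ = 0 from Fin.ext (by omega)], fun ℓ hℓ => by omega⟩ :
      (∀ ℓ, (s ℓ).1 = (s 0).1) ∧ (∀ (ℓ : ℕ) (hℓ : ℓ + 1 < 0 + 1),
        (((s ⟨ℓ, by omega⟩).2.2 : ℕ) = ((s ⟨ℓ + 1, hℓ⟩).2.1 : ℕ))))]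
    simp only [Fsum_zero]
    have hcond : ∀ a : G, ((1:G) = a⁻¹ * h) ↔ (a = h) := by
      intro a; rw [eq_inv_mul_iff_mul_eq, mul_one]
    simp only [hcond, mul_ite, mul_one, mul_zero, Finset.sum_ite_eq', Finset.mem_univ, if_true]
    have hlast : Fin.last 0 = (0 : Fin 1) := rfl
    rw [hlast, pow_zero, one_mul, Fin.cast_eq_self]
  | succ m ih =>
    intro s h
    rw [Fsum_succ]
    have ihspec : ∀ a : G,
        Fsum (m+1) (fun ℓ g => ρ (s ℓ.succ).1 g (s ℓ.succ).2.1 (s ℓ.succ).2.2) (a⁻¹ * h)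
        = _ := fun a => ih (fun ℓ => s ℓ.succ) (a⁻¹ * h)
    simp only [ihspec]
    rcases Classical.em ((∀ ℓ : Fin (m+1), (s ℓ.succ).1 = (s (0 : Fin (m+1)).succ).1) ∧
        (∀ (ℓ : ℕ) (hℓ : ℓ + 1 < m + 1),
          (((s (⟨ℓ, by omega⟩ : Fin (m+1)).succ).2.2 : ℕ)
            = ((s (⟨ℓ + 1, hℓ⟩ : Fin (m+1)).succ).2.1 : ℕ)))) with hc' | hc'
    · simp only [dif_pos hc']
      rw [sum_pull]
      rw [conv_phi hρ (s 0) ⟨(s (0 : Fin (m+1)).succ).1, (s (0 : Fin (m+1)).succ).2.1,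
        Fin.cast (congrArg n (hc'.1 (Fin.last m))) (s (Fin.last m).succ).2.2⟩ h]
      rcases Classical.em ((s 0).1 = (s (0 : Fin (m+1)).succ).1 ∧
          ((s 0).2.2 : ℕ) = ((s (0 : Fin (m+1)).succ).2.1 : ℕ)) with hin | hin
      · rw [dif_pos hin]
        have hfull : (∀ ℓ, (s ℓ).1 = (s 0).1) ∧
            (∀ (ℓ : ℕ) (hℓ : ℓ + 1 < m + 1 + 1),
              (((s ⟨ℓ, by omega⟩).2.2 : ℕ) = ((s ⟨ℓ + 1, hℓ⟩).2.1 : ℕ))) := by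
          constructor
          · intro ℓ
            refine Fin.cases rfl (fun j => ?_) ℓ
            exact (hc'.1 j).trans hin.1.symm
          · intro ℓ hℓ
            match ℓ with
            | 0 => exact hin.2
            | Nat.succ j => exact hc'.2 j (by omega)
        rw [dif_pos hfull]
        have hcoef : ((Fintype.card G : ℂ) / (n (s (0 : Fin (m+1)).succ).1 : ℂ))
            = ((Fintype.card G : ℂ) / (n (s 0).1 : ℂ)) := by rw [hin.1.symm]
        rw [hcoef]
        have hXY : Fin.cast (congrArg n hin.1.symm)
              (Fin.cast (congrArg n (hc'.1 (Fin.last m))) (s (Fin.last m).succ).2.2)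
            = Fin.cast (congrArg n (hfull.1 (Fin.last (m+1)))) (s (Fin.last (m+1))).2.2 := by
          apply Fin.ext
          simp only [Fin.coe_cast]
          rw [Fin.succ_last]
        rw [hXY]
        ring
      · rw [dif_neg hin, mul_zero]
        rw [dif_neg]
        rintro ⟨h1, h2⟩
        apply hin
        refine ⟨(h1 (0 : Fin (m+1)).succ).symm, ?_⟩
        have e1 : ((0 : Fin (m+1)).succ : Fin (m+2)) = ⟨1, by omega⟩ := by
          apply Fin.ext; simp
        rw [e1]
        exact h2 0 (by omega)
    · simp only [dif_neg hc', mul_zero, Finset.sum_const_zero]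
      rw [dif_neg]
      rintro ⟨h1, h2⟩
      apply hc'
      constructor
      · intro ℓ
        exact (h1 ℓ.succ).trans (h1 (0 : Fin (m+1)).succ).symm
      · intro ℓ hℓ
        exact h2 (ℓ+1) (by omega)


end GHAux

open Classical in
/-- **Tensor block-diagonalization of the group hypermatrix.** The group Fourier transform
matrix `U`, `U_{(t,i,j),g} = (n_t/|G|)^{1/2} ρ_t(g)_{ij}`, is unitary, and applying it to
every mode of `C^G(x)` yields the block-diagonal hypermatrix with blocks
`(|G|/n_t)^{d/2-1} · M^{(d)}_{ρ_t(x)}`: the entry at `((t₁,i₁,j₁),…,(t_d,i_d,j_d))` is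
`(|G|/n_t)^{d/2-1} (Σ_g x_g ρ_t(g))_{i₁ j_d}` when `t₁ = ⋯ = t_d = t` and
`j₁ = i₂, …, j_{d-1} = i_d`, and `0` otherwise. -/
theorem group_hypermatrix_block_diagonalization (d : ℕ) (hd : 2 ≤ d) (hde : Even d)
    (G : Type*) [Group G] [Fintype G] [DecidableEq G]
    (T : Type*) [Fintype T] (n : T → ℕ)
    (ρ : ∀ t, G →* Matrix (Fin (n t)) (Fin (n t)) ℂ)
    (hρ : IsCompleteIrrFamily G n ρ) :
    let U : Matrix (Σ t : T, Fin (n t) × Fin (n t)) G ℂ :=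
      fun s g => (Real.sqrt ((n s.1 : ℝ) / (Fintype.card G : ℝ)) : ℂ) * ρ s.1 g s.2.1 s.2.2
    U * U.conjTranspose = 1 ∧
    ∀ k : Fin d → Σ t : T, Fin (n t) × Fin (n t),
      (∑ g : Fin d → G, (∏ ℓ, U (k ℓ) (g ℓ)) • groupHyper d G g) =
        if h : (∀ ℓ, (k ℓ).1 = (k ⟨0, by omega⟩).1) ∧
            ∀ (ℓ : ℕ) (hℓ : ℓ + 1 < d),
              (((k ⟨ℓ, by omega⟩).2.2 : ℕ) = ((k ⟨ℓ + 1, hℓ⟩).2.1 : ℕ))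
        then MvPolynomial.C (((Fintype.card G : ℂ) / (n (k ⟨0, by omega⟩).1 : ℂ)) ^ (d / 2 - 1)) *
          repMatrix (ρ (k ⟨0, by omega⟩).1) (k ⟨0, by omega⟩).2.1
            (Fin.cast (congrArg n (h.1 ⟨d - 1, by omega⟩)) (k ⟨d - 1, by omega⟩).2.2)
        else 0 := by
  intro U
  have hU : ∀ (s : Σ t : T, Fin (n t) × Fin (n t)) (g : G),
      U s g = (Real.sqrt ((n s.1 : ℝ) / (Fintype.card G : ℝ)) : ℂ) * ρ s.1 g s.2.1 s.2.2 :=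
    fun _ _ => rfl
  have hG0 : ((Fintype.card G : ℝ)) ≠ 0 := Nat.cast_ne_zero.mpr Fintype.card_ne_zero
  have hGc0 : ((Fintype.card G : ℂ)) ≠ 0 := Nat.cast_ne_zero.mpr Fintype.card_ne_zero
  constructor
  · ext s s'
    rw [Matrix.mul_apply]
    obtain ⟨t, i, j⟩ := s
    obtain ⟨t', k, l⟩ := s'
    haveI := hρ.irred t
    haveI := hρ.irred t'
    have hn0 : (n t : ℂ) ≠ 0 := Nat.cast_ne_zero.mpr i.pos.ne'
    have h1 : ∀ g : G, U ⟨t, (i, j)⟩ g * U.conjTranspose g ⟨t', (k, l)⟩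
        = ((Real.sqrt ((n t : ℝ) / (Fintype.card G : ℝ)) : ℂ) *
            (Real.sqrt ((n t' : ℝ) / (Fintype.card G : ℝ)) : ℂ)) *
          (ρ t g i j * (starRingEnd ℂ) (ρ t' g k l)) := by
      intro g
      rw [Matrix.conjTranspose_apply, hU, hU, star_mul', Complex.star_def, Complex.conj_ofReal]
      dsimp only
      ring
    simp only [h1]
    rw [← Finset.mul_sum]
    by_cases ht : t = t'
    · subst ht
      rw [GHAux.orth_eq (ρ t) (hρ.unitary t) i j k l]
      have hs : ((Real.sqrt ((n t : ℝ) / (Fintype.card G : ℝ)) : ℂ) *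
          (Real.sqrt ((n t : ℝ) / (Fintype.card G : ℝ)) : ℂ)) = (n t : ℂ) / (Fintype.card G : ℂ) := by
        rw [← Complex.ofReal_mul, Real.mul_self_sqrt (by positivity)]
        push_cast
        ring
      rw [hs]
      by_cases hik : i = k
      · by_cases hjl : j = l
        · subst hik; subst hjl
          simp only [if_pos rfl, mul_one, Matrix.one_apply_eq]
          field_simp
          simp
        · have hne : (⟨t, (i, j)⟩ : Σ t : T, Fin (n t) × Fin (n t)) ≠ ⟨t, (k, l)⟩ := by
            simp [Sigma.mk.inj_iff, Prod.ext_iff, hjl]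
          rw [Matrix.one_apply_ne hne]
          simp [hjl]
      · have hne : (⟨t, (i, j)⟩ : Σ t : T, Fin (n t) × Fin (n t)) ≠ ⟨t, (k, l)⟩ := by
          simp [Sigma.mk.inj_iff, Prod.ext_iff, hik]
        rw [Matrix.one_apply_ne hne]
        simp [hik]
    · haveI : IsEmpty ((matRep (ρ t')).asModule ≃ₗ[MonoidAlgebra ℂ G] (matRep (ρ t)).asModule) :=
        hρ.noniso t' t (Ne.symm ht)
      rw [GHAux.orth_ne (ρ t) (ρ t') (hρ.unitary t') this i j k l, mul_zero]
      have hne : (⟨t, (i, j)⟩ : Σ t : T, Fin (n t) × Fin (n t)) ≠ ⟨t', (k, l)⟩ := by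
        simp [Sigma.mk.inj_iff, ht]
      rw [Matrix.one_apply_ne hne]
  · intro k
    obtain ⟨m, rfl⟩ : ∃ m, d = m + 1 := ⟨d - 1, by omega⟩
    have hprod : ∀ g : Fin (m+1) → G, (∏ ℓ, U (k ℓ) (g ℓ))
        = (∏ ℓ, ((Real.sqrt ((n (k ℓ).1 : ℝ) / (Fintype.card G : ℝ)) : ℂ)))
          * ∏ ℓ, ρ (k ℓ).1 (g ℓ) (k ℓ).2.1 (k ℓ).2.2 := by
      intro g
      rw [← Finset.prod_mul_distrib]
    have hLHS : (∑ g : Fin (m+1) → G, (∏ ℓ, U (k ℓ) (g ℓ)) • groupHyper (m+1) G g)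
        = ∑ h : G, ((∏ ℓ, ((Real.sqrt ((n (k ℓ).1 : ℝ) / (Fintype.card G : ℝ)) : ℂ)))
            * GHAux.Fsum (m+1) (fun ℓ g => ρ (k ℓ).1 g (k ℓ).2.1 (k ℓ).2.2) h)
          • MvPolynomial.X h := by
      calc (∑ g : Fin (m+1) → G, (∏ ℓ, U (k ℓ) (g ℓ)) • groupHyper (m+1) G g)
          = ∑ g : Fin (m+1) → G, ∑ h : G,
              (if (List.ofFn g).prod = h then
                ((∏ ℓ, ((Real.sqrt ((n (k ℓ).1 : ℝ) / (Fintype.card G : ℝ)) : ℂ)))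
                  * ∏ ℓ, ρ (k ℓ).1 (g ℓ) (k ℓ).2.1 (k ℓ).2.2) • MvPolynomial.X h else 0) := by
            refine Finset.sum_congr rfl fun g _ => ?_
            rw [Finset.sum_ite_eq, if_pos (Finset.mem_univ _), hprod g]
            rfl
        _ = ∑ h : G, ∑ g : Fin (m+1) → G,
              (if (List.ofFn g).prod = h then
                ((∏ ℓ, ((Real.sqrt ((n (k ℓ).1 : ℝ) / (Fintype.card G : ℝ)) : ℂ)))
                  * ∏ ℓ, ρ (k ℓ).1 (g ℓ) (k ℓ).2.1 (k ℓ).2.2) • MvPolynomial.X h else 0) :=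
            Finset.sum_comm
        _ = ∑ h : G, ((∏ ℓ, ((Real.sqrt ((n (k ℓ).1 : ℝ) / (Fintype.card G : ℝ)) : ℂ)))
            * GHAux.Fsum (m+1) (fun ℓ g => ρ (k ℓ).1 g (k ℓ).2.1 (k ℓ).2.2) h)
              • MvPolynomial.X h := by
            refine Finset.sum_congr rfl fun h _ => ?_
            rw [GHAux.Fsum, Finset.mul_sum, Finset.sum_smul]
            refine Finset.sum_congr rfl fun g _ => ?_
            split_ifs with hgh
            · rfl
            · rw [mul_zero, zero_smul]
    rw [hLHS]
    simp only [GHAux.Fsum_phi hρ m k]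
    by_cases hc : (∀ ℓ : Fin (m+1), (k ℓ).1 = (k 0).1) ∧
        (∀ (ℓ : ℕ) (hℓ : ℓ + 1 < m + 1),
          (((k ⟨ℓ, by omega⟩).2.2 : ℕ) = ((k ⟨ℓ + 1, hℓ⟩).2.1 : ℕ)))
    · simp only [dif_pos hc]
      have hc2 : (∀ ℓ, (k ℓ).1 = (k (⟨0, by omega⟩ : Fin (m+1))).1) ∧
          ∀ (ℓ : ℕ) (hℓ : ℓ + 1 < m + 1),
            (((k ⟨ℓ, by omega⟩).2.2 : ℕ) = ((k ⟨ℓ + 1, hℓ⟩).2.1 : ℕ)) := hc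
      rw [dif_pos hc2]
      have hrep : repMatrix (ρ (k (⟨0, by omega⟩ : Fin (m+1))).1) (k ⟨0, by omega⟩).2.1
            (Fin.cast (congrArg n (hc2.1 ⟨m + 1 - 1, by omega⟩)) (k ⟨m + 1 - 1, by omega⟩).2.2)
          = ∑ h : G, MvPolynomial.X h * MvPolynomial.C
              (ρ (k (⟨0, by omega⟩ : Fin (m+1))).1 h (k ⟨0, by omega⟩).2.1
                (Fin.cast (congrArg n (hc2.1 ⟨m + 1 - 1, by omega⟩)) (k ⟨m + 1 - 1, by omega⟩).2.2)) := by
        rw [repMatrix, Matrix.sum_apply]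
        refine Finset.sum_congr rfl fun h _ => ?_
        rw [Matrix.smul_apply, Matrix.map_apply, smul_eq_mul]
      rw [hrep, Finset.mul_sum]
      have hC0 : (∏ ℓ, ((Real.sqrt ((n (k ℓ).1 : ℝ) / (Fintype.card G : ℝ)) : ℂ)))
          = ((Real.sqrt ((n (k 0).1 : ℝ) / (Fintype.card G : ℝ)) : ℂ)) ^ (m+1) := by
        rw [Finset.prod_congr rfl (fun ℓ _ => by rw [hc.1 ℓ]),
          Finset.prod_const, Finset.card_univ, Fintype.card_fin]
      have hn0 : ((n (k 0).1 : ℂ)) ≠ 0 := Nat.cast_ne_zero.mpr (k 0).2.1.pos.ne'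
      have hsq : ((Real.sqrt ((n (k 0).1 : ℝ) / (Fintype.card G : ℝ)) : ℂ)) ^ 2
          = (n (k 0).1 : ℂ) / (Fintype.card G : ℂ) := by
        rw [sq, ← Complex.ofReal_mul, Real.mul_self_sqrt (by positivity)]
        push_cast
        ring
      have h2q : m + 1 = 2 * ((m + 1) / 2) := by
        obtain ⟨r, hr⟩ := hde
        omega
      have hone : ((n (k 0).1 : ℂ) / (Fintype.card G : ℂ)) ^ ((m+1)/2)
          * ((Fintype.card G : ℂ) / (n (k 0).1 : ℂ)) ^ ((m+1)/2) = 1 := by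
        rw [← mul_pow, div_mul_div_comm, mul_comm ((n (k 0).1 : ℂ)), div_self
          (mul_ne_zero hGc0 hn0), one_pow]
      have hscal : ((Real.sqrt ((n (k 0).1 : ℝ) / (Fintype.card G : ℝ)) : ℂ)) ^ (m+1)
          * ((Fintype.card G : ℂ) / (n (k 0).1 : ℂ)) ^ m
          = ((Fintype.card G : ℂ) / (n (k 0).1 : ℂ)) ^ ((m+1)/2 - 1) := by
        calc ((Real.sqrt ((n (k 0).1 : ℝ) / (Fintype.card G : ℝ)) : ℂ)) ^ (m+1)
            * ((Fintype.card G : ℂ) / (n (k 0).1 : ℂ)) ^ m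
            = (((Real.sqrt ((n (k 0).1 : ℝ) / (Fintype.card G : ℝ)) : ℂ)) ^ 2) ^ ((m+1)/2)
              * ((Fintype.card G : ℂ) / (n (k 0).1 : ℂ)) ^ m := by
              rw [← pow_mul, ← h2q]
          _ = ((n (k 0).1 : ℂ) / (Fintype.card G : ℂ)) ^ ((m+1)/2)
              * (((Fintype.card G : ℂ) / (n (k 0).1 : ℂ)) ^ ((m+1)/2)
                * ((Fintype.card G : ℂ) / (n (k 0).1 : ℂ)) ^ (m - (m+1)/2)) := by
              rw [hsq, ← pow_add, show (m+1)/2 + (m - (m+1)/2) = m from by omega]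
          _ = ((Fintype.card G : ℂ) / (n (k 0).1 : ℂ)) ^ (m - (m+1)/2) := by
              rw [← mul_assoc, hone, one_mul]
          _ = ((Fintype.card G : ℂ) / (n (k 0).1 : ℂ)) ^ ((m+1)/2 - 1) := by
              rw [show m - (m+1)/2 = (m+1)/2 - 1 from by omega]
      refine Finset.sum_congr rfl fun h _ => ?_
      rw [MvPolynomial.smul_eq_C_mul, hC0, ← mul_assoc, hscal, _root_.map_mul]
      have hz : (ρ (k (⟨0, by omega⟩ : Fin (m+1))).1) h (k ⟨0, by omega⟩).2.1
            (Fin.cast (congrArg n (hc2.1 ⟨m + 1 - 1, by omega⟩)) (k ⟨m + 1 - 1, by omega⟩).2.2)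
          = (ρ (k 0).1) h (k 0).2.1
            (Fin.cast (congrArg n (hc.1 (Fin.last m))) (k (Fin.last m)).2.2) := rfl
      rw [hz, show (n (k (⟨0, by omega⟩ : Fin (m+1))).1 : ℂ) = (n (k 0).1 : ℂ) from rfl]
      ring
    · simp only [dif_neg hc, mul_zero, zero_smul, Finset.sum_const_zero]
      have hc2 : ¬((∀ ℓ, (k ℓ).1 = (k (⟨0, by omega⟩ : Fin (m+1))).1) ∧
          ∀ (ℓ : ℕ) (hℓ : ℓ + 1 < m + 1),
            (((k ⟨ℓ, by omega⟩).2.2 : ℕ) = ((k ⟨ℓ + 1, hℓ⟩).2.1 : ℕ))) := hc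
      rw [dif_neg hc2]
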